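/- For p large enough, ( ∑_{n ∈ ℕ*, n ≠ p} 1/|λ_n − λ_p + λ| )² ≥ 1/p, for any fixed real λ > 0, where λ_n = −i·(n(g + n²)·tanh(hn))^{1/2}. Consequently the family (q_n) fails the quadratically-close (Hilbert–Schmidt) criterion in L². -/

import Mathlib

open Real Filter

private lemma tanh_lb (x : ℝ) : 1 - 2 * Real.exp (-(2*x)) ≤ Real.tanh x := by
  rw [Real.tanh_eq_sinh_div_cosh, Real.sinh_eq, Real.cosh_eq,
    le_div_iff₀ (by positivity)]
  have h1 : Real.exp x * Real.exp (-x) = 1 := by rw [← Real.exp_add]; simp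
  have h2 : Real.exp (-(2*x)) = Real.exp (-x) * Real.exp (-x) := by
    rw [← Real.exp_add]; ring_nf
  nlinarith [Real.exp_pos x, Real.exp_pos (-x), pow_pos (Real.exp_pos (-x)) 3]

private lemma tanh_mono' {a b : ℝ} (hab : a ≤ b) : Real.tanh a ≤ Real.tanh b := by
  rw [Real.tanh_eq_sinh_div_cosh, Real.tanh_eq_sinh_div_cosh,
    div_le_div_iff₀ (Real.cosh_pos a) (Real.cosh_pos b), Real.sinh_eq, Real.cosh_eq,
    Real.sinh_eq, Real.cosh_eq]
  have h1 : Real.exp a * Real.exp (-b) = Real.exp (a - b) := by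
    rw [← Real.exp_add]; ring_nf
  have h2 : Real.exp b * Real.exp (-a) = Real.exp (b - a) := by
    rw [← Real.exp_add]; ring_nf
  have h3 : Real.exp (a - b) ≤ Real.exp (b - a) := Real.exp_le_exp.mpr (by linarith)
  nlinarith [Real.exp_pos a, Real.exp_pos b, Real.exp_pos (-a), Real.exp_pos (-b)]

private lemma tanh_nonneg' {x : ℝ} (hx : 0 ≤ x) : 0 ≤ Real.tanh x := by
  have := tanh_mono' hx
  simpa [Real.tanh_zero] using this

private lemma tanh_le_one' (x : ℝ) : Real.tanh x ≤ 1 := by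
  rw [Real.tanh_eq_sinh_div_cosh, div_le_one (Real.cosh_pos x), Real.sinh_eq, Real.cosh_eq]
  nlinarith [Real.exp_pos (-x)]

private lemma le_of_sq_le_sq' {a b : ℝ} (h : a^2 ≤ b^2) (hb : 0 ≤ b) : a ≤ b := by
  nlinarith [sq_nonneg (a-b), sq_nonneg (a+b)]

private lemma poly_key (q k g lam0 : ℝ) (hk1 : 1 ≤ k) (hk2 : k ≤ 60) (hg : 0 < g)
    (hl : 0 < lam0) (hq : g + lam0 + 1000 ≤ q) :
    (q^2+k)*(g+(q^2+k)^2) ≤ q^6 - 1 + 2*(q^3-1)*((4*k+2)*q - lam0) := by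
  have hq1 : 1000 ≤ q := by linarith
  have hqg : g ≤ q := by linarith
  have hql : lam0 ≤ q := by linarith
  have hq0 : (0:ℝ) < q := by linarith
  have hk0 : (0:ℝ) ≤ k := by linarith
  have hA : g*q^2 ≤ q^3 := by nlinarith
  have hB : 1000*q^3 ≤ q^4 := by
    nlinarith [mul_le_mul_of_nonneg_right hq1 (pow_pos hq0 3).le]
  have hC : 1000*q^2 ≤ q^3 := by nlinarith
  have hD : 1000*q ≤ q^2 := by nlinarith
  have hE : g*k ≤ 60*q := by nlinarith
  have hF : k^2*q^2 ≤ 3600*q^2 := by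
    nlinarith [sq_nonneg q, mul_le_mul hk2 hk2 hk0 (by norm_num : (0:ℝ) ≤ 60)]
  have hG : k^3 ≤ 216000 := by nlinarith
  have hH : lam0*q^3 ≤ q^4 := by nlinarith
  have hI : q^4 ≤ k*q^4 := by nlinarith
  have hK : k*q ≤ 60*q := by nlinarith
  have hq2 : 1000000 ≤ q^2 := by nlinarith
  nlinarith [hA, hB, hC, hD, hE, hF, hG, hH, hI, hK, hq2]

set_option maxHeartbeats 1000000 in
/-- For p large, (∑_{n ≠ p} 1/|λ_n − λ_p + λ|)² ≥ 1/p; consequently the weighted squares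
are not summable (failure of the quadratically-close / Hilbert–Schmidt criterion). -/
theorem stmt7 (g h : ℝ) (hg : 0 < g) (hh : 0 < h)
    (lam : ℕ → ℂ)
    (hlam : ∀ n : ℕ, lam n =
      -Complex.I * Real.sqrt ((n : ℝ) * (g + (n : ℝ) ^ 2) * Real.tanh (h * n)))
    (lam0 : ℝ) (hlam0 : 0 < lam0) :
    (∃ N : ℕ, ∀ p : ℕ, N ≤ p →
      1 / (p : ℝ) ≤
        (∑' n : ℕ, if n = 0 ∨ n = p then 0
          else 1 / ‖lam n - lam p + (lam0 : ℂ)‖) ^ 2) ∧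
    ¬ Summable (fun p : ℕ => if p = 0 then 0 else
        (∑' n : ℕ, if n = 0 ∨ n = p then 0
          else 1 / ‖lam n - lam p + (lam0 : ℂ)‖) ^ 2) := by
  set s : ℕ → ℝ := fun n => Real.sqrt ((n : ℝ) * (g + (n : ℝ) ^ 2) * Real.tanh (h * n))
    with hsdef
  -- basic facts about s
  have harg : ∀ n : ℕ, 0 ≤ (n:ℝ) * (g + (n:ℝ)^2) * Real.tanh (h*n) := by
    intro n
    have h0 : (0:ℝ) ≤ h * n := by positivity
    have := tanh_nonneg' h0
    positivity
  have hs_nonneg : ∀ n, 0 ≤ s n := fun n => Real.sqrt_nonneg _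
  have hs_sq : ∀ n : ℕ, s n ^ 2 = (n:ℝ) * (g + (n:ℝ)^2) * Real.tanh (h*n) :=
    fun n => Real.sq_sqrt (harg n)
  have hs_mono : ∀ a b : ℕ, a ≤ b → s a ≤ s b := by
    intro a b hab
    apply Real.sqrt_le_sqrt
    have hab' : (a:ℝ) ≤ b := Nat.cast_le.mpr hab
    have ha0 : (0:ℝ) ≤ a := Nat.cast_nonneg a
    have hb0 : (0:ℝ) ≤ b := Nat.cast_nonneg b
    have hX : (a:ℝ)*(g+(a:ℝ)^2) ≤ (b:ℝ)*(g+(b:ℝ)^2) := by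
      nlinarith [mul_le_mul hab' hab' ha0 hb0, hg.le]
    have hta : 0 ≤ Real.tanh (h*(a:ℝ)) := tanh_nonneg' (by positivity)
    have htm : Real.tanh (h*(a:ℝ)) ≤ Real.tanh (h*(b:ℝ)) :=
      tanh_mono' (by nlinarith)
    have hXb : 0 ≤ (b:ℝ)*(g+(b:ℝ)^2) := by nlinarith
    exact mul_le_mul hX htm hta hXb
  -- re and im of the relevant complex numbers
  have hre : ∀ n m : ℕ, (lam n - lam m + (lam0:ℂ)).re = lam0 := by
    intro n m; simp [hlam, hsdef]
  have him : ∀ n m : ℕ, (lam n - lam m + (lam0:ℂ)).im = s m - s n := by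
    intro n m; simp [hlam, hsdef]; ring
  have habs_ge : ∀ n m : ℕ, lam0 ≤ ‖lam n - lam m + (lam0:ℂ)‖ := by
    intro n m
    have h1 := Complex.abs_re_le_norm (lam n - lam m + (lam0:ℂ))
    rwa [hre n m, abs_of_pos hlam0] at h1
  have habs_le : ∀ n m : ℕ,
      ‖lam n - lam m + (lam0:ℂ)‖ ≤ lam0 + |s m - s n| := by
    intro n m
    have h1 := Complex.norm_le_abs_re_add_abs_im (lam n - lam m + (lam0:ℂ))
    rwa [hre n m, him n m, abs_of_pos hlam0] at h1
  -- choice of N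
  have E1 : ∀ᶠ p : ℕ in atTop, 2*(p:ℝ)^3 * Real.exp (-(2*h*(p:ℝ))) ≤ 1 := by
    have t1 : Tendsto (fun p : ℕ => (2*h*(p:ℝ))) atTop atTop := by
      exact Tendsto.const_mul_atTop (by positivity) tendsto_natCast_atTop_atTop
    have t2 := (tendsto_pow_mul_exp_neg_atTop_nhds_zero 3).comp t1
    have t3 : Tendsto (fun p : ℕ => 2*(p:ℝ)^3 * Real.exp (-(2*h*(p:ℝ)))) atTop (nhds 0) := by
      have t4 := t2.const_mul (1/(4*h^3))
      rw [mul_zero] at t4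
      refine t4.congr fun p => ?_
      simp only [Function.comp_apply]
      field_simp
      ring
    have := t3.eventually_lt_const (by norm_num : (0:ℝ) < 1)
    filter_upwards [this] with p hp using hp.le
  have E2 : ∀ᶠ p : ℕ in atTop, (g+lam0+1000)^2 ≤ (p:ℝ) :=
    tendsto_natCast_atTop_atTop.eventually_ge_atTop _
  have E3 : ∀ᶠ p : ℕ in atTop, 1 ≤ p := eventually_ge_atTop 1
  obtain ⟨N, hN⟩ := eventually_atTop.mp ((E1.and E2).and E3)
  -- the main estimate
  have main : ∀ p : ℕ, N ≤ p →
      1 / (p : ℝ) ≤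
        (∑' n : ℕ, if n = 0 ∨ n = p then 0
          else 1 / ‖lam n - lam p + (lam0 : ℂ)‖) ^ 2 := by
    intro p hp
    obtain ⟨⟨hE1, hE2⟩, hp1⟩ := hN p hp
    set f : ℕ → ℝ := fun n => if n = 0 ∨ n = p then 0
      else 1 / ‖lam n - lam p + (lam0:ℂ)‖ with hfdef
    have fnn : ∀ n, 0 ≤ f n := by
      intro n
      rw [hfdef]
      dsimp only
      split
      · exact le_rfl
      · positivity
    -- q = sqrt p
    set q : ℝ := Real.sqrt p with hqdef
    have hq2 : q^2 = (p:ℝ) := Real.sq_sqrt (Nat.cast_nonneg p)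
    have hqq : g + lam0 + 1000 ≤ q := by
      have : g + lam0 + 1000 ≤ Real.sqrt ((g+lam0+1000)^2) := by
        rw [Real.sqrt_sq (by positivity)]
      exact this.trans (Real.sqrt_le_sqrt hE2)
    have hq0 : (0:ℝ) < q := by linarith
    have hq1000 : (1000:ℝ) ≤ q := by linarith
    -- lower bound for s p
    have hsp2 : (p:ℝ)^3 - 1 ≤ s p ^ 2 := by
      rw [hs_sq]
      have ht := tanh_lb (h*(p:ℝ))
      rw [show 2*(h*(p:ℝ)) = 2*h*(p:ℝ) by ring] at ht
      have t0 : 0 ≤ Real.tanh (h*(p:ℝ)) := tanh_nonneg' (by positivity)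
      have hp0 : (0:ℝ) ≤ p := Nat.cast_nonneg p
      nlinarith [mul_le_mul_of_nonneg_left ht (pow_nonneg hp0 3),
        mul_nonneg (mul_nonneg hp0 hg.le) t0]
    have hp3q : ((p:ℝ))^3 = q^6 := by rw [← hq2]; ring
    have hq1 : (1:ℝ) ≤ q := by linarith
    have hq3 : (1:ℝ) ≤ q^3 := by nlinarith
    have hsp : q^3 - 1 ≤ s p := by
      apply le_of_sq_le_sq' _ (hs_nonneg p)
      nlinarith [hsp2, hp3q]
    -- upper bound for s (p+k)
    have hub : ∀ k : ℕ, 1 ≤ k → k ≤ 60 →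
        s (p+k) ≤ s p + ((4*(k:ℝ)+2)*q - lam0) := by
      intro k hk1 hk60
      have hk1' : (1:ℝ) ≤ k := by exact_mod_cast hk1
      have hk60' : (k:ℝ) ≤ 60 := by exact_mod_cast hk60
      have hA0 : 0 ≤ (4*(k:ℝ)+2)*q - lam0 := by nlinarith
      have hub2 : s (p+k) ^ 2 ≤ ((p:ℝ)+k)*(g+((p:ℝ)+k)^2) := by
        rw [hs_sq]
        push_cast
        have t1 := tanh_le_one' (h*((p:ℝ)+k))
        have t0 : 0 ≤ Real.tanh (h*((p:ℝ)+k)) := tanh_nonneg' (by positivity)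
        have hX : (0:ℝ) ≤ ((p:ℝ)+k)*(g+((p:ℝ)+k)^2) := by positivity
        nlinarith
      have hkey := poly_key q (k:ℝ) g lam0 hk1' hk60' hg hlam0 hqq
      rw [hq2] at hkey
      have hsq : s (p+k) ^ 2 ≤ (s p + ((4*(k:ℝ)+2)*q - lam0)) ^ 2 := by
        have e1 : (s p + ((4*(k:ℝ)+2)*q - lam0)) ^ 2 ≥
            s p ^ 2 + 2*(q^3-1)*((4*(k:ℝ)+2)*q - lam0) := by
          nlinarith [mul_nonneg (by linarith : (0:ℝ) ≤ s p - (q^3-1)) hA0,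
            sq_nonneg ((4*(k:ℝ)+2)*q - lam0)]
        linarith [hub2, hkey, e1, hsp2, hp3q]
      exact le_of_sq_le_sq' hsq (by linarith [hs_nonneg p])
    -- per-term bound
    have hterm : ∀ k ∈ Finset.Icc (1:ℕ) 60,
        (1/q) * (1/(4*(k:ℝ)+2)) ≤ f (p+k) := by
      intro k hk
      obtain ⟨hk1, hk60⟩ := Finset.mem_Icc.mp hk
      have hk1' : (1:ℝ) ≤ k := by exact_mod_cast hk1
      have hk60' : (k:ℝ) ≤ 60 := by exact_mod_cast hk60
      have hne : ¬(p + k = 0 ∨ p + k = p) := by omega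
      have hfval : f (p+k) = 1 / ‖lam (p+k) - lam p + (lam0:ℂ)‖ := by
        rw [hfdef]; simp only [if_neg hne]
      rw [hfval]
      have hmono := hs_mono p (p+k) (Nat.le_add_right p k)
      have habs : ‖lam (p+k) - lam p + (lam0:ℂ)‖ ≤ (4*(k:ℝ)+2)*q := by
        refine (habs_le (p+k) p).trans ?_
        rw [abs_of_nonpos (by linarith)]
        have := hub k hk1 hk60
        linarith
      have h0 : 0 < ‖lam (p+k) - lam p + (lam0:ℂ)‖ :=
        lt_of_lt_of_le hlam0 (habs_ge _ _)
      have h1 := one_div_le_one_div_of_le h0 habs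
      have heq : 1/((4*(k:ℝ)+2)*q) = (1/q) * (1/(4*(k:ℝ)+2)) := by
        rw [one_div_mul_one_div]
        rw [mul_comm q _]
      rw [heq] at h1
      exact h1
    -- summability of f
    have hsum : Summable f := by
      have Ev : ∀ᶠ n : ℕ in atTop, f n ≤ 4 * ((n:ℝ) ^ ((3:ℝ)/2))⁻¹ := by
        have a1 : ∀ᶠ n : ℕ in atTop, Real.exp (-(2*h*(n:ℝ))) ≤ 1/4 := by
          have t1 : Tendsto (fun n : ℕ => (2*h*(n:ℝ))) atTop atTop :=
            Tendsto.const_mul_atTop (by positivity) tendsto_natCast_atTop_atTop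
          have t2 := Real.tendsto_exp_neg_atTop_nhds_zero.comp t1
          have := t2.eventually_lt_const (by norm_num : (0:ℝ) < 1/4)
          filter_upwards [this] with n hn using hn.le
        have a2 : ∀ᶠ n : ℕ in atTop, 8*((p:ℝ)*(g+(p:ℝ)^2)) + 1 ≤ (n:ℝ) :=
          tendsto_natCast_atTop_atTop.eventually_ge_atTop _
        have a3 : ∀ᶠ n : ℕ in atTop, 1 ≤ n := eventually_ge_atTop 1
        filter_upwards [a1, a2, a3] with n h1 h2 h3
        by_cases hcase : n = 0 ∨ n = p
        · rw [hfdef]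
          simp only [if_pos hcase]
          positivity
        have hn1 : (1:ℝ) ≤ n := by exact_mod_cast h3
        have hn0 : (0:ℝ) < n := by linarith
        set r : ℝ := (n:ℝ) ^ ((3:ℝ)/2) with hrdef
        have hr0 : 0 < r := Real.rpow_pos_of_pos hn0 _
        have hr2 : r^2 = (n:ℝ)^3 := by
          rw [hrdef, ← Real.rpow_natCast ((n:ℝ) ^ ((3:ℝ)/2)) 2, ← Real.rpow_mul hn0.le,
            ← Real.rpow_natCast (n:ℝ) 3]
          norm_num
        -- s n is large
        have hsn2 : (n:ℝ)^3 * (1/2) ≤ s n ^ 2 := by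
          rw [hs_sq]
          have ht := tanh_lb (h*(n:ℝ))
          rw [show 2*(h*(n:ℝ)) = 2*h*(n:ℝ) by ring] at ht
          have t0 : 0 ≤ Real.tanh (h*(n:ℝ)) := tanh_nonneg' (by positivity)
          nlinarith [pow_nonneg hn0.le 3, mul_nonneg (mul_nonneg hn0.le hg.le) t0,
            mul_le_mul_of_nonneg_left ht (pow_nonneg hn0.le 3)]
        have hsp2' : s p ^ 2 ≤ (p:ℝ)*(g+(p:ℝ)^2) := by
          rw [hs_sq]
          have t1 := tanh_le_one' (h*(p:ℝ))
          have t0 : 0 ≤ Real.tanh (h*(p:ℝ)) := tanh_nonneg' (by positivity)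
          have hX : (0:ℝ) ≤ (p:ℝ)*(g+(p:ℝ)^2) := by positivity
          nlinarith
        have hnsq : (1:ℝ) ≤ (n:ℝ)^2 := by nlinarith
        have hn3 : (n:ℝ) ≤ (n:ℝ)^3 := by
          nlinarith [mul_le_mul_of_nonneg_left hnsq hn0.le]
        have h4sp : 4 * s p ^ 2 ≤ s n ^ 2 := by nlinarith
        have hsn_ge : 2 * s p ≤ s n := by
          apply le_of_sq_le_sq' _ (hs_nonneg n)
          nlinarith [h4sp]
        have hsn_r : r / 2 ≤ s n := by
          apply le_of_sq_le_sq' _ (hs_nonneg n)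
          nlinarith [hsn2, hr2]
        have hgap : r / 4 ≤ s n - s p := by
          nlinarith [hs_nonneg p]
        have habs_ge_gap : r / 4 ≤ ‖lam n - lam p + (lam0:ℂ)‖ := by
          have h5 := Complex.abs_im_le_norm (lam n - lam p + (lam0:ℂ))
          rw [him n p, abs_sub_comm, abs_of_nonneg (by linarith : (0:ℝ) ≤ s n - s p)] at h5
          linarith
        have hfval : f n = 1 / ‖lam n - lam p + (lam0:ℂ)‖ := by
          rw [hfdef]; simp only [if_neg hcase]
        rw [hfval]
        have hr4 : (0:ℝ) < r / 4 := by linarith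
        have := one_div_le_one_div_of_le hr4 habs_ge_gap
        calc 1 / ‖lam n - lam p + (lam0:ℂ)‖ ≤ 1 / (r/4) := this
          _ = 4 * r⁻¹ := by field_simp
      obtain ⟨M, hM⟩ := eventually_atTop.mp Ev
      have gsummable : Summable (fun n : ℕ => 4 * ((n:ℝ) ^ ((3:ℝ)/2))⁻¹) :=
        (Real.summable_nat_rpow_inv.mpr (by norm_num)).mul_left 4
      rw [← summable_nat_add_iff M]
      exact Summable.of_nonneg_of_le (fun n => fnn (n+M))
        (fun n => hM (n+M) (Nat.le_add_left M n))
        ((summable_nat_add_iff M).mpr gsummable)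
    -- put it together
    have hnum : (1:ℝ) ≤ ∑ k ∈ Finset.Icc (1:ℕ) 60, (1/(4*(k:ℝ)+2)) := by
      rw [← Finset.Ico_add_one_right_eq_Icc, Finset.sum_Ico_eq_sum_range]
      norm_num [Finset.sum_range_succ]
    have hT : ∑ k ∈ Finset.Icc (1:ℕ) 60, f (p+k) ≤ ∑' n, f n := by
      have hinj : Set.InjOn (fun k => p + k) (Finset.Icc (1:ℕ) 60) := fun a _ b _ hab => by
        simpa using hab
      rw [← Finset.sum_image hinj]
      exact Summable.sum_le_tsum _ (fun n _ => fnn n) hsum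
    have hq_ge : 1/q ≤ ∑' n, f n := by
      calc 1/q = (1/q) * 1 := by ring
        _ ≤ (1/q) * ∑ k ∈ Finset.Icc (1:ℕ) 60, (1/(4*(k:ℝ)+2)) := by
            apply mul_le_mul_of_nonneg_left hnum (by positivity)
        _ = ∑ k ∈ Finset.Icc (1:ℕ) 60, (1/q) * (1/(4*(k:ℝ)+2)) := Finset.mul_sum _ _ _
        _ ≤ ∑ k ∈ Finset.Icc (1:ℕ) 60, f (p+k) := Finset.sum_le_sum hterm
        _ ≤ ∑' n, f n := hT
    have hts : 0 ≤ ∑' n, f n := tsum_nonneg fnn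
    have hfin : (1/q)^2 ≤ (∑' n, f n)^2 :=
      pow_le_pow_left₀ (by positivity) hq_ge 2
    calc 1/(p:ℝ) = (1/q)^2 := by rw [← hq2]; rw [div_pow]; norm_num
      _ ≤ (∑' n, f n)^2 := hfin
  refine ⟨⟨N, main⟩, ?_⟩
  intro hsummable
  set F : ℕ → ℝ := fun p => if p = 0 then 0 else
      (∑' n : ℕ, if n = 0 ∨ n = p then 0
        else 1 / ‖lam n - lam p + (lam0 : ℂ)‖) ^ 2 with hFdef
  have hM : ∀ j : ℕ, 1/((j + (N+1) : ℕ):ℝ) ≤ F (j + (N+1)) := by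
    intro j
    have hge : N ≤ j + (N+1) := by omega
    have hne : ¬(j + (N+1) = 0) := by omega
    have := main (j + (N+1)) hge
    rw [hFdef]
    simp only [if_neg hne]
    exact this
  have s1 : Summable (fun j : ℕ => F (j + (N+1))) :=
    (summable_nat_add_iff (N+1)).mpr hsummable
  have s2 : Summable (fun j : ℕ => 1/((j + (N+1) : ℕ):ℝ)) :=
    Summable.of_nonneg_of_le (fun j => by positivity) hM s1
  have s3 : Summable (fun j : ℕ => 1/(j:ℝ)) :=
    (summable_nat_add_iff (N+1)).mp s2
  exact Real.not_summable_one_div_natCast s3
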